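/- Let X be a mild M-set and f ∈ M. Then the action of f on X is an injective map X → X. -/
import Mathlib


/-- The monoid of injective self-maps of ω (modelled as ℕ), under composition. -/
def M : Submonoid (Function.End ℕ) where
  carrier := {f | Function.Injective f}
  mul_mem' := fun hf hg => hf.comp hg
  one_mem' := fun _ _ h => h

/-- `x` is supported on `A` if it is fixed by every injection fixing `A` pointwise. -/
def Supported {X : Type*} [MulAction M X] (A : Set ℕ) (x : X) : Prop :=
  ∀ u : M, (∀ a ∈ A, u.1 a = a) → u • x = x

/-- If `Cᶜ` is infinite, `f⁻¹` (defined on `f '' C`) extends to a total injection. -/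
lemma exists_left_inv (f : M) (C : Set ℕ) (hC : (Cᶜ : Set ℕ).Infinite) :
    ∃ v : M, ∀ c ∈ C, v.1 (f.1 c) = c := by
  classical
  have hf : Function.Injective f.1 := f.2
  set e := Set.Infinite.natEmbedding _ hC with he
  set vf : ℕ → ℕ := fun n =>
    if h : n ∈ f.1 '' C then Function.invFun f.1 n else (e n : ℕ) with hvf
  have hval : ∀ c ∈ C, vf (f.1 c) = c := by
    intro c hc
    simp only [hvf]
    rw [dif_pos ⟨c, hc, rfl⟩]
    exact Function.leftInverse_invFun hf c
  have hmem : ∀ n, n ∈ f.1 '' C → vf n ∈ C ∧ f.1 (vf n) = n := by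
    rintro n ⟨c, hc, rfl⟩
    rw [hval c hc]; exact ⟨hc, rfl⟩
  have hout : ∀ n, n ∉ f.1 '' C → vf n ∈ (Cᶜ : Set ℕ) := by
    intro n h
    simp only [hvf]
    rw [dif_neg h]
    exact (e n).2
  have hinj : Function.Injective vf := by
    intro a b hab
    by_cases ha : a ∈ f.1 '' C <;> by_cases hb : b ∈ f.1 '' C
    · have h1 := (hmem a ha).2
      have h2 := (hmem b hb).2
      rw [← h1, ← h2, hab]
    · exact absurd ((hmem a ha).1) (by rw [hab] at *; exact hout b hb)
    · exact absurd ((hmem b hb).1) (by rw [← hab] at *; exact hout a ha)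
    · have : (e a : ℕ) = (e b : ℕ) := by
        have h1 : vf a = (e a : ℕ) := by simp only [hvf]; rw [dif_neg ha]
        have h2 : vf b = (e b : ℕ) := by simp only [hvf]; rw [dif_neg hb]
        rw [← h1, ← h2, hab]
      exact e.injective (Subtype.coe_injective this)
  exact ⟨⟨vf, hinj⟩, hval⟩

/-- Transport of supports: if `x` is supported on `P`, then `g • x` is supported on
`g '' P ∪ (range g)ᶜ`. -/
lemma supported_smul {X : Type*} [MulAction M X] (g : M) (x : X) (P : Set ℕ)
    (hP : Supported P x) : Supported (g.1 '' P ∪ (Set.range g.1)ᶜ) (g • x) := by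
  intro u hu
  have hrange : ∀ m, m ∈ Set.range g.1 → u.1 m ∈ Set.range g.1 := by
    intro m hm
    by_contra hc
    have h1 : u.1 (u.1 m) = u.1 m := hu (u.1 m) (Or.inr hc)
    have h2 : u.1 m = m := u.2 h1
    rw [h2] at hc
    exact hc hm
  have hex : ∀ n : ℕ, ∃ m, g.1 m = u.1 (g.1 n) := fun n => hrange (g.1 n) ⟨n, rfl⟩
  classical
  set t : ℕ → ℕ := fun n => (hex n).choose with htdef
  have hspec : ∀ n, g.1 (t n) = u.1 (g.1 n) := fun n => (hex n).choose_spec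
  have htinj : Function.Injective t := by
    intro a b hab
    have : u.1 (g.1 a) = u.1 (g.1 b) := by rw [← hspec a, ← hspec b, hab]
    exact g.2 (u.2 this)
  have htfix : ∀ a ∈ P, t a = a := by
    intro a ha
    apply g.2
    rw [hspec a]
    exact hu (g.1 a) (Or.inl ⟨a, ha, rfl⟩)
  have hkey : u * g = g * (⟨t, htinj⟩ : M) := by
    apply Subtype.ext
    funext n
    exact (hspec n).symm
  rw [← mul_smul, hkey, mul_smul, hP ⟨t, htinj⟩ htfix]

/-- Endgame: common co-infinite complement of supports gives injectivity. -/
lemma eq_of_supports {X : Type*} [MulAction M X] (f : M) {x y : X} {P Q : Set ℕ}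
    (hx : Supported P x) (hy : Supported Q y) (hinf : ((P ∪ Q)ᶜ : Set ℕ).Infinite)
    (h : f • x = f • y) : x = y := by
  obtain ⟨χ, hχ⟩ := exists_left_inv f (P ∪ Q) hinf
  have h1 : (χ * f) • x = x := hx (χ * f) (fun a ha => hχ a (Or.inl ha))
  have h2 : (χ * f) • y = y := hy (χ * f) (fun b hb => hχ b (Or.inr hb))
  calc x = (χ * f) • x := h1.symm
    _ = χ • (f • x) := mul_smul χ f x
    _ = χ • (f • y) := by rw [h]
    _ = (χ * f) • y := (mul_smul χ f y).symm
    _ = y := h2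

theorem stmt_11 {X : Type*} [MulAction M X]
    (hmild : ∀ x : X, ∃ A : Set ℕ, (Aᶜ : Set ℕ).Infinite ∧ Supported A x)
    (f : M) : Function.Injective (fun x : X => f • x) := by
  intro x y h
  have h' : f • x = f • y := h
  obtain ⟨A, hA, hAx⟩ := hmild x
  obtain ⟨B, hB, hBy⟩ := hmild y
  by_cases hK : ((Aᶜ ∩ B : Set ℕ)).Infinite
  · -- the combined complement may be finite; transport supports first
    classical
    set e := Set.Infinite.natEmbedding _ hK with he
    set K' : Set ℕ := Set.range (fun n : ℕ => ((e (2 * n) : ℕ))) with hK'def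
    have hK'inf : K'.Infinite := by
      apply Set.infinite_range_of_injective
      intro a b hab
      have := e.injective (Subtype.coe_injective hab)
      omega
    have hK'A : K' ⊆ (Aᶜ : Set ℕ) := by
      rintro _ ⟨n, rfl⟩
      exact (e (2 * n)).2.1
    have hK'B : K' ⊆ B := by
      rintro _ ⟨n, rfl⟩
      exact (e (2 * n)).2.2
    have hCc : (((A ∪ K')ᶜ : Set ℕ)).Infinite := by
      apply Set.infinite_of_injective_forall_mem
        (f := fun n : ℕ => ((e (2 * n + 1) : ℕ)))
      · intro a b hab
        have := e.injective (Subtype.coe_injective hab)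
        omega
      · intro n
        intro hmem
        rcases hmem with hmem | hmem
        · exact (e (2 * n + 1)).2.1 hmem
        · obtain ⟨m, hm⟩ := hmem
          have := e.injective (Subtype.coe_injective hm)
          omega
    obtain ⟨v, hv⟩ := exists_left_inv f (A ∪ K') hCc
    obtain ⟨w, hw⟩ := exists_left_inv f B hB
    have hz : Supported (f.1 '' A ∪ (Set.range f.1)ᶜ) (f • x) :=
      supported_smul f x A hAx
    have hxv : x = v • (f • x) := by
      rw [← mul_smul]
      exact (hAx (v * f) (fun a ha => hv a (Or.inl ha))).symm
    have hyw : y = w • (f • x) := by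
      rw [h', ← mul_smul]
      exact (hBy (w * f) (fun b hb => hw b hb)).symm
    have hxs : Supported (v.1 '' (f.1 '' A ∪ (Set.range f.1)ᶜ) ∪ (Set.range v.1)ᶜ) x := by
      rw [hxv]; exact supported_smul v (f • x) _ hz
    have hys : Supported (w.1 '' (f.1 '' A ∪ (Set.range f.1)ᶜ) ∪ (Set.range w.1)ᶜ) y := by
      rw [hyw]; exact supported_smul w (f • x) _ hz
    apply eq_of_supports f hxs hys _ h'
    apply hK'inf.mono
    rintro k hk
    have hkA : k ∈ (Aᶜ : Set ℕ) := hK'A hk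
    have hkv : v.1 (f.1 k) = k := hv k (Or.inr hk)
    have hkw : w.1 (f.1 k) = k := hw k (hK'B hk)
    intro hmem
    rcases hmem with hmem | hmem
    · rcases hmem with ⟨s, hs, hvs⟩ | hmem
      · have hsk : s = f.1 k := v.2 (by rw [hvs, hkv])
        rcases hs with ⟨a, ha, hfa⟩ | hs
        · rw [hsk] at hfa
          exact hkA (f.2 hfa ▸ ha)
        · exact hs (hsk ▸ ⟨k, rfl⟩)
      · exact hmem (hkv ▸ ⟨f.1 k, rfl⟩)
    · rcases hmem with ⟨s, hs, hws⟩ | hmem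
      · have hsk : s = f.1 k := w.2 (by rw [hws, hkw])
        rcases hs with ⟨a, ha, hfa⟩ | hs
        · rw [hsk] at hfa
          exact hkA (f.2 hfa ▸ ha)
        · exact hs (hsk ▸ ⟨k, rfl⟩)
      · exact hmem (hkw ▸ ⟨f.1 k, rfl⟩)
  · -- here `Aᶜ ∩ Bᶜ` is infinite and the simple argument works
    have hABc : ((Aᶜ ∩ Bᶜ : Set ℕ)).Infinite := by
      by_contra hfin
      rw [Set.not_infinite] at hfin hK
      apply hA
      apply (hK.union hfin).subset
      intro a ha
      by_cases hb : a ∈ B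
      · exact Or.inl ⟨ha, hb⟩
      · exact Or.inr ⟨ha, hb⟩
    apply eq_of_supports f hAx hBy _ h'
    rw [Set.compl_union]
    exact hABc
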